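/- In the Cayley–Klein hyperbolic plane, the three altitudes of a triangle (the line through each vertex perpendicular to the opposite side, i.e., joining the vertex to the pole of the opposite side) are concurrent in the projective plane. -/

import Mathlib

open Matrix

/-- Points (and, dually, lines) of the real projective plane are represented by
nonzero vectors of `ℝ³`; `dot3` is the incidence pairing. -/
def dot3 (u v : Fin 3 → ℝ) : ℝ := u 0 * v 0 + u 1 * v 1 + u 2 * v 2

/-- The (projective points represented by) three vectors are collinear: some nonzero
line form vanishes on all of them. -/
def Coll (a b c : Fin 3 → ℝ) : Prop :=
  ∃ l : Fin 3 → ℝ, l ≠ 0 ∧ dot3 l a = 0 ∧ dot3 l b = 0 ∧ dot3 l c = 0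

/-- `CRv a b c d k`: the cross ratio `(abcd)` of four collinear projective points
(represented by the given vectors) equals `k`.  Writing `c = x•a + y•b` and
`d = z•a + w•b`, the cross ratio is `(y/x)/(w/z) = (y*z)/(x*w)`; this value is
independent of the chosen representative vectors. -/
def CRv (a b c d : Fin 3 → ℝ) (k : ℝ) : Prop :=
  ∃ x y z w : ℝ, c = x • a + y • b ∧ d = z • a + w • b ∧ x * w ≠ 0 ∧
    k = (y * z) / (x * w)

private lemma coll_of_det3 (a b c : Fin 3 → ℝ) (h : (Matrix.of ![a,b,c]).det = 0) :
    Coll a b c := by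
  obtain ⟨l, hl, h0⟩ := (Matrix.exists_mulVec_eq_zero_iff).mpr h
  have h1 := congrFun h0 0
  have h2 := congrFun h0 1
  have h3 := congrFun h0 2
  simp [Matrix.mulVec, dotProduct, Fin.sum_univ_three] at h1 h2 h3
  exact ⟨l, hl, by simp [dot3]; linarith, by simp [dot3]; linarith, by simp [dot3]; linarith⟩

private lemma combo3 (A B C : Fin 3 → ℝ) (x : Fin 3 → ℝ) :
    (Matrix.of ![A,B,C])ᵀ *ᵥ x = x 0 • A + x 1 • B + x 2 • C := by
  rw [Matrix.mulVec_transpose]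
  funext j
  simp [Matrix.vecMul, dotProduct, Fin.sum_univ_three]

/-- Concurrency of the altitudes of a triangle in the Cayley–Klein plane (a shadow of
Chasles' polar-triangle theorem): if `A', B', C'` are the poles of the sides `BC, CA, AB`
of a triangle `ABC` with respect to a nondegenerate conic `M` (triangle and polar
triangle in general position, no vertex on the conic), then the altitudes `AA'`, `BB'`,
`CC'` are concurrent in the projective plane. -/
theorem altitudes_concurrent (M : Matrix (Fin 3) (Fin 3) ℝ)
    (hsymm : M.IsSymm) (hdet : M.det ≠ 0)
    (A B C A' B' C' : Fin 3 → ℝ)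
    (hABC : ¬Coll A B C)
    (hAc : dot3 A (M.mulVec A) ≠ 0) (hBc : dot3 B (M.mulVec B) ≠ 0)
    (hCc : dot3 C (M.mulVec C) ≠ 0)
    (hA' : A' ≠ 0) (hA'B : dot3 B (M.mulVec A') = 0) (hA'C : dot3 C (M.mulVec A') = 0)
    (hB' : B' ≠ 0) (hB'C : dot3 C (M.mulVec B') = 0) (hB'A : dot3 A (M.mulVec B') = 0)
    (hC' : C' ≠ 0) (hC'A : dot3 A (M.mulVec C') = 0) (hC'B : dot3 B (M.mulVec C') = 0)
    (hAA' : ∀ t : ℝ, A' ≠ t • A) (hBB' : ∀ t : ℝ, B' ≠ t • B)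
    (hCC' : ∀ t : ℝ, C' ≠ t • C) :
    ∃ H : Fin 3 → ℝ, H ≠ 0 ∧ Coll A A' H ∧ Coll B B' H ∧ Coll C C' H := by
  -- the triangle is nondegenerate: A, B, C form a basis
  have hNdet : (Matrix.of ![A,B,C]).det ≠ 0 := fun hd => hABC (coll_of_det3 A B C hd)
  -- coordinates with respect to the basis A, B, C
  have coords : ∀ V : Fin 3 → ℝ, ∃ x y z : ℝ, V = x • A + y • B + z • C := by
    intro V
    have hdt : (Matrix.of ![A,B,C])ᵀ.det ≠ 0 := by rwa [Matrix.det_transpose]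
    have hinv : (Matrix.of ![A,B,C])ᵀ * ((Matrix.of ![A,B,C])ᵀ)⁻¹ = 1 :=
      Matrix.mul_nonsing_inv _ (isUnit_iff_ne_zero.mpr hdt)
    refine ⟨_, _, _, ((combo3 A B C (((Matrix.of ![A,B,C])ᵀ)⁻¹ *ᵥ V)).symm.trans ?_).symm⟩
    rw [Matrix.mulVec_mulVec, hinv, Matrix.one_mulVec]
  -- linear independence
  have indep : ∀ x y z : ℝ, x • A + y • B + z • C = 0 → x = 0 ∧ y = 0 ∧ z = 0 := by
    intro x y z h
    by_contra hc
    have hv : ![x,y,z] ≠ 0 := fun h0 => hc ⟨congrFun h0 0, congrFun h0 1, congrFun h0 2⟩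
    have hmv : (Matrix.of ![A,B,C])ᵀ *ᵥ ![x,y,z] = 0 := by
      rw [combo3]; simpa using h
    have := Matrix.exists_mulVec_eq_zero_iff.mp ⟨![x,y,z], hv, hmv⟩
    rw [Matrix.det_transpose] at this
    exact hNdet this
  -- a vector dot3-orthogonal to the basis is zero
  have orth0 : ∀ z : Fin 3 → ℝ, dot3 A z = 0 → dot3 B z = 0 → dot3 C z = 0 → z = 0 := by
    intro z h1 h2 h3
    by_contra hz
    have hm : (Matrix.of ![A,B,C]) *ᵥ z = 0 := by
      funext i
      fin_cases i <;>
        simp [Matrix.mulVec, dotProduct, Fin.sum_univ_three, dot3] at h1 h2 h3 ⊢ <;> linarith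
    exact hNdet (Matrix.exists_mulVec_eq_zero_iff.mp ⟨z, hz, hm⟩)
  -- M is injective
  have Minj : ∀ z : Fin 3 → ℝ, M *ᵥ z = 0 → z = 0 := by
    intro z h
    by_contra hz
    exact hdet (Matrix.exists_mulVec_eq_zero_iff.mp ⟨z, hz, h⟩)
  -- symmetry of the polarity pairing
  have phisymm : ∀ u v : Fin 3 → ℝ, dot3 u (M *ᵥ v) = dot3 v (M *ᵥ u) := by
    intro u v
    have h : ∀ i j, M i j = M j i := fun i j => hsymm.apply j i
    simp [dot3, Matrix.mulVec, dotProduct, Fin.sum_univ_three]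
    rw [h 1 0, h 2 0, h 2 1]; ring
  -- bilinearity
  have expand : ∀ (X P Q R : Fin 3 → ℝ) (x y z : ℝ),
      dot3 X (M *ᵥ (x • P + y • Q + z • R)) =
        x * dot3 X (M *ᵥ P) + y * dot3 X (M *ᵥ Q) + z * dot3 X (M *ᵥ R) := by
    intros; simp [Matrix.mulVec_add, Matrix.mulVec_smul, dot3]; ring
  have expand2 : ∀ (X P Q : Fin 3 → ℝ) (t : ℝ),
      dot3 X (M *ᵥ (P - t • Q)) = dot3 X (M *ᵥ P) - t * dot3 X (M *ᵥ Q) := by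
    intros; simp [Matrix.mulVec_sub, Matrix.mulVec_smul, dot3]; ring
  obtain ⟨p, q, r, hA'e⟩ := coords A'
  obtain ⟨p', q', r', hB'e⟩ := coords B'
  obtain ⟨p'', q'', r'', hC'e⟩ := coords C'
  -- the six linear relations
  have e1 : p * dot3 A (M.mulVec B) + q * dot3 B (M.mulVec B) + r * dot3 B (M.mulVec C) = 0 := by
    have h := hA'B; rw [hA'e, expand, phisymm B A] at h; exact h
  have e2 : p * dot3 A (M.mulVec C) + q * dot3 B (M.mulVec C) + r * dot3 C (M.mulVec C) = 0 := by
    have h := hA'C; rw [hA'e, expand, phisymm C A, phisymm C B] at h; exact h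
  have e3 : p' * dot3 A (M.mulVec A) + q' * dot3 A (M.mulVec B) + r' * dot3 A (M.mulVec C) = 0 := by
    have h := hB'A; rw [hB'e, expand] at h; exact h
  have e4 : p' * dot3 A (M.mulVec C) + q' * dot3 B (M.mulVec C) + r' * dot3 C (M.mulVec C) = 0 := by
    have h := hB'C; rw [hB'e, expand, phisymm C A, phisymm C B] at h; exact h
  have e5 : p'' * dot3 A (M.mulVec A) + q'' * dot3 A (M.mulVec B) + r'' * dot3 A (M.mulVec C) = 0 := by
    have h := hC'A; rw [hC'e, expand] at h; exact h
  have e6 : p'' * dot3 A (M.mulVec B) + q'' * dot3 B (M.mulVec B) + r'' * dot3 B (M.mulVec C) = 0 := by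
    have h := hC'B; rw [hC'e, expand, phisymm B A] at h; exact h
  -- the cofactor scalars
  obtain ⟨u, hu⟩ : ∃ u : ℝ, u = dot3 B (M.mulVec C) * dot3 A (M.mulVec C) -
      dot3 A (M.mulVec B) * dot3 C (M.mulVec C) := ⟨_, rfl⟩
  obtain ⟨v, hv⟩ : ∃ v : ℝ, v = dot3 A (M.mulVec B) * dot3 B (M.mulVec C) -
      dot3 B (M.mulVec B) * dot3 A (M.mulVec C) := ⟨_, rfl⟩
  obtain ⟨w, hw⟩ : ∃ w : ℝ, w = dot3 A (M.mulVec C) * dot3 A (M.mulVec B) -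
      dot3 A (M.mulVec A) * dot3 B (M.mulVec C) := ⟨_, rfl⟩
  have huv : q * v = r * u := by
    rw [hu, hv]
    linear_combination dot3 A (M.mulVec B) * e2 - dot3 A (M.mulVec C) * e1
  have hr'u : r' * u = p' * w := by
    rw [hu, hw]
    linear_combination dot3 B (M.mulVec C) * e3 - dot3 A (M.mulVec B) * e4
  have hq''v : q'' * v = p'' * w := by
    rw [hv, hw]
    linear_combination dot3 B (M.mulVec C) * e5 - dot3 A (M.mulVec C) * e6
  -- nondegeneracy of the pairs (u,v), (u,w), (v,w)
  have pair_uv : ¬(u = 0 ∧ v = 0) := by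
    rintro ⟨hu0, hv0⟩
    have hu' : dot3 B (M.mulVec C) * dot3 A (M.mulVec C) -
        dot3 A (M.mulVec B) * dot3 C (M.mulVec C) = 0 := by rw [← hu]; exact hu0
    have hv' : dot3 A (M.mulVec B) * dot3 B (M.mulVec C) -
        dot3 B (M.mulVec B) * dot3 A (M.mulVec C) = 0 := by rw [← hv]; exact hv0
    by_cases hA1 : dot3 B (M.mulVec B) * dot3 C (M.mulVec C) -
        dot3 B (M.mulVec C) * dot3 B (M.mulVec C) = 0
    · -- degenerate: C is a multiple of B, contradicting the triangle
      have hy : M *ᵥ (C - (dot3 B (M.mulVec C) / dot3 B (M.mulVec B)) • B) = 0 := by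
        refine orth0 _ ?_ ?_ ?_
        · rw [expand2]; field_simp; linear_combination -hv'
        · rw [expand2]; field_simp; ring
        · rw [expand2, phisymm C B]; field_simp; linear_combination hA1
      have hy2 : C - (dot3 B (M.mulVec C) / dot3 B (M.mulVec B)) • B = 0 := Minj _ hy
      have h0 : (0:ℝ) • A + (dot3 B (M.mulVec C) / dot3 B (M.mulVec B)) • B + (-1 : ℝ) • C = 0 := by
        funext j
        have := congrFun hy2 j
        simp at this ⊢
        linarith
      obtain ⟨-, -, h3⟩ := indep _ _ _ h0
      norm_num at h3
    · have hq0 : q = 0 := by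
        have h2 : q * (dot3 B (M.mulVec B) * dot3 C (M.mulVec C) -
            dot3 B (M.mulVec C) * dot3 B (M.mulVec C)) = 0 := by
          linear_combination dot3 C (M.mulVec C) * e1 - dot3 B (M.mulVec C) * e2 + p * hu'
        exact (mul_eq_zero.mp h2).resolve_right hA1
      have hr0 : r = 0 := by
        have h2 : r * (dot3 B (M.mulVec B) * dot3 C (M.mulVec C) -
            dot3 B (M.mulVec C) * dot3 B (M.mulVec C)) = 0 := by
          linear_combination dot3 B (M.mulVec B) * e2 - dot3 B (M.mulVec C) * e1 + p * hv'
        exact (mul_eq_zero.mp h2).resolve_right hA1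
      exact hAA' p (hA'e.trans (by rw [hq0, hr0]; simp))
  have pair_uw : ¬(u = 0 ∧ w = 0) := by
    rintro ⟨hu0, hw0⟩
    have hu' : dot3 B (M.mulVec C) * dot3 A (M.mulVec C) -
        dot3 A (M.mulVec B) * dot3 C (M.mulVec C) = 0 := by rw [← hu]; exact hu0
    have hw' : dot3 A (M.mulVec C) * dot3 A (M.mulVec B) -
        dot3 A (M.mulVec A) * dot3 B (M.mulVec C) = 0 := by rw [← hw]; exact hw0
    by_cases hA1 : dot3 A (M.mulVec A) * dot3 C (M.mulVec C) -
        dot3 A (M.mulVec C) * dot3 A (M.mulVec C) = 0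
    · have hy : M *ᵥ (C - (dot3 A (M.mulVec C) / dot3 A (M.mulVec A)) • A) = 0 := by
        refine orth0 _ ?_ ?_ ?_
        · rw [expand2]; field_simp; ring
        · rw [expand2, phisymm B A]; field_simp; linear_combination -hw'
        · rw [expand2, phisymm C A]; field_simp; linear_combination hA1
      have hy2 : C - (dot3 A (M.mulVec C) / dot3 A (M.mulVec A)) • A = 0 := Minj _ hy
      have h0 : (dot3 A (M.mulVec C) / dot3 A (M.mulVec A)) • A + (0:ℝ) • B + (-1 : ℝ) • C = 0 := by
        funext j
        have := congrFun hy2 j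
        simp at this ⊢
        linarith
      obtain ⟨-, -, h3⟩ := indep _ _ _ h0
      norm_num at h3
    · have hp0 : p' = 0 := by
        have h2 : p' * (dot3 A (M.mulVec A) * dot3 C (M.mulVec C) -
            dot3 A (M.mulVec C) * dot3 A (M.mulVec C)) = 0 := by
          linear_combination dot3 C (M.mulVec C) * e3 - dot3 A (M.mulVec C) * e4 + q' * hu'
        exact (mul_eq_zero.mp h2).resolve_right hA1
      have hr0 : r' = 0 := by
        have h2 : r' * (dot3 A (M.mulVec A) * dot3 C (M.mulVec C) -
            dot3 A (M.mulVec C) * dot3 A (M.mulVec C)) = 0 := by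
          linear_combination dot3 A (M.mulVec A) * e4 - dot3 A (M.mulVec C) * e3 + q' * hw'
        exact (mul_eq_zero.mp h2).resolve_right hA1
      exact hBB' q' (hB'e.trans (by rw [hp0, hr0]; simp))
  have pair_vw : ¬(v = 0 ∧ w = 0) := by
    rintro ⟨hv0, hw0⟩
    have hv' : dot3 A (M.mulVec B) * dot3 B (M.mulVec C) -
        dot3 B (M.mulVec B) * dot3 A (M.mulVec C) = 0 := by rw [← hv]; exact hv0
    have hw' : dot3 A (M.mulVec C) * dot3 A (M.mulVec B) -
        dot3 A (M.mulVec A) * dot3 B (M.mulVec C) = 0 := by rw [← hw]; exact hw0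
    by_cases hA1 : dot3 A (M.mulVec A) * dot3 B (M.mulVec B) -
        dot3 A (M.mulVec B) * dot3 A (M.mulVec B) = 0
    · have hy : M *ᵥ (B - (dot3 A (M.mulVec B) / dot3 A (M.mulVec A)) • A) = 0 := by
        refine orth0 _ ?_ ?_ ?_
        · rw [expand2]; field_simp; ring
        · rw [expand2, phisymm B A]; field_simp; linear_combination hA1
        · rw [expand2, phisymm C B, phisymm C A]; field_simp; linear_combination -hw'
      have hy2 : B - (dot3 A (M.mulVec B) / dot3 A (M.mulVec A)) • A = 0 := Minj _ hy
      have h0 : (dot3 A (M.mulVec B) / dot3 A (M.mulVec A)) • A + (-1 : ℝ) • B + (0:ℝ) • C = 0 := by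
        funext j
        have := congrFun hy2 j
        simp at this ⊢
        linarith
      obtain ⟨-, h2, -⟩ := indep _ _ _ h0
      norm_num at h2
    · have hp0 : p'' = 0 := by
        have h2 : p'' * (dot3 A (M.mulVec A) * dot3 B (M.mulVec B) -
            dot3 A (M.mulVec B) * dot3 A (M.mulVec B)) = 0 := by
          linear_combination dot3 B (M.mulVec B) * e5 - dot3 A (M.mulVec B) * e6 + r'' * hv'
        exact (mul_eq_zero.mp h2).resolve_right hA1
      have hq0 : q'' = 0 := by
        have h2 : q'' * (dot3 A (M.mulVec A) * dot3 B (M.mulVec B) -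
            dot3 A (M.mulVec B) * dot3 A (M.mulVec B)) = 0 := by
          linear_combination dot3 A (M.mulVec A) * e6 - dot3 A (M.mulVec B) * e5 + r'' * hw'
        exact (mul_eq_zero.mp h2).resolve_right hA1
      exact hCC' r'' (hC'e.trans (by rw [hp0, hq0]; simp))
  -- the orthocenter
  set H : Fin 3 → ℝ := (u*v) • A + (u*w) • B + (v*w) • C with hHe
  refine ⟨H, ?_, ?_, ?_, ?_⟩
  · -- H ≠ 0
    intro h0
    obtain ⟨h1, h2, h3⟩ := indep _ _ _ h0
    by_cases hu0 : u = 0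
    · exact mul_ne_zero (fun h => pair_uv ⟨hu0, h⟩) (fun h => pair_uw ⟨hu0, h⟩) h3
    · by_cases hv0 : v = 0
      · exact mul_ne_zero hu0 (fun h => pair_vw ⟨hv0, h⟩) h2
      · exact mul_ne_zero hu0 hv0 h1
  · -- Coll A A' H
    apply coll_of_det3
    have hfac : Matrix.of ![A, A', H] =
        (Matrix.of ![![1,0,0], ![p,q,r], ![u*v,u*w,v*w]]) * (Matrix.of ![A,B,C]) := by
      funext i j
      fin_cases i <;> simp [Matrix.mul_apply, Fin.sum_univ_three, hA'e, hHe]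
    rw [hfac, Matrix.det_mul]
    have hT : (Matrix.of ![![(1:ℝ),0,0], ![p,q,r], ![u*v,u*w,v*w]]).det = 0 := by
      simp [Matrix.det_fin_three]
      linear_combination w * huv
    rw [hT, zero_mul]
  · -- Coll B B' H
    apply coll_of_det3
    have hfac : Matrix.of ![B, B', H] =
        (Matrix.of ![![0,1,0], ![p',q',r'], ![u*v,u*w,v*w]]) * (Matrix.of ![A,B,C]) := by
      funext i j
      fin_cases i <;> simp [Matrix.mul_apply, Fin.sum_univ_three, hB'e, hHe]
    rw [hfac, Matrix.det_mul]
    have hT : (Matrix.of ![![(0:ℝ),1,0], ![p',q',r'], ![u*v,u*w,v*w]]).det = 0 := by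
      simp [Matrix.det_fin_three]
      linear_combination v * hr'u
    rw [hT, zero_mul]
  · -- Coll C C' H
    apply coll_of_det3
    have hfac : Matrix.of ![C, C', H] =
        (Matrix.of ![![0,0,1], ![p'',q'',r''], ![u*v,u*w,v*w]]) * (Matrix.of ![A,B,C]) := by
      funext i j
      fin_cases i <;> simp [Matrix.mul_apply, Fin.sum_univ_three, hC'e, hHe]
    rw [hfac, Matrix.det_mul]
    have hT : (Matrix.of ![![(0:ℝ),0,1], ![p'',q'',r''], ![u*v,u*w,v*w]]).det = 0 := by
      simp [Matrix.det_fin_three]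
      linear_combination -u * hq''v
    rw [hT, zero_mul]
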